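/- arXiv:2603.09504 — 2 statements merged into one kernel-verified Lean document; each statement's English description precedes it below -/
import Mathlib

section
/- Under the assumptions that E_θ[T_+] < ∞, E_θ[(X_1^+)^{k+1}] < ∞, and μ_θ = E_θ[X_1] > 0, the first ladder height S_{T_+} satisfies E_θ[S_{T_+}^{k+1}] ≤ E_θ[T_+]·E_θ[(X_1^+)^{k+1}] and E_θ[S_{T_+}] = E_θ[T_+]·μ_θ; hence E_θ[S_{T_+}^{k+1}] / ((k+1) E_θ[S_{T_+}]) ≤ E_θ[(X_1^+)^{k+1}] / ((k+1) μ_θ). -/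
open MeasureTheory Real

/-- Lemma 2.2: for an i.i.d. random walk with `E[T₊] < ∞`, `E[(X₁⁺)^{k+1}] < ∞` and
`μ = E[X₁] > 0`, the first strict ascending ladder height `S_{T₊}` satisfies
`E[S_{T₊}^{k+1}] ≤ E[T₊]·E[(X₁⁺)^{k+1}]` and (Wald) `E[S_{T₊}] = E[T₊]·μ`; hence
`E[S_{T₊}^{k+1}]/((k+1)E[S_{T₊}]) ≤ E[(X₁⁺)^{k+1}]/((k+1)μ)`. -/
theorem stmt7 {Ω : Type*} [MeasurableSpace Ω] (P : Measure Ω) [IsProbabilityMeasure P]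
    (X : ℕ → Ω → ℝ) (hmeas : ∀ n, Measurable (X n))
    (hindep : ProbabilityTheory.iIndepFun X P)
    (hident : ∀ n, ProbabilityTheory.IdentDistrib (X n) (X 1) P P)
    (S : ℕ → Ω → ℝ) (hS : ∀ n ω, S n ω = ∑ i ∈ Finset.range n, X (i + 1) ω)
    (T : Ω → ℕ) (hT : ∀ ω, T ω = sInf {n : ℕ | 1 ≤ n ∧ 0 < S n ω})
    (hne : ∀ ω, {n : ℕ | 1 ≤ n ∧ 0 < S n ω}.Nonempty)
    (k : ℕ)
    (hX1 : Integrable (X 1) P)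
    (hTint : Integrable (fun ω => (T ω : ℝ)) P)
    (hXk : Integrable (fun ω => max (X 1 ω) 0 ^ (k + 1)) P)
    (hμ : 0 < ∫ ω, X 1 ω ∂P) :
    (∫ ω, S (T ω) ω ^ (k + 1) ∂P) ≤
        (∫ ω, (T ω : ℝ) ∂P) * ∫ ω, max (X 1 ω) 0 ^ (k + 1) ∂P ∧
    (∫ ω, S (T ω) ω ∂P) = (∫ ω, (T ω : ℝ) ∂P) * ∫ ω, X 1 ω ∂P ∧
    (∫ ω, S (T ω) ω ^ (k + 1) ∂P) / ((k + 1) * ∫ ω, S (T ω) ω ∂P) ≤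
        (∫ ω, max (X 1 ω) 0 ^ (k + 1) ∂P) / ((k + 1) * ∫ ω, X 1 ω ∂P) := by
  classical
  -- basic measurability
  have hSmeas : ∀ n, Measurable (S n) := by
    intro n
    have h : S n = fun ω => ∑ i ∈ Finset.range n, X (i + 1) ω := funext fun ω => hS n ω
    rw [h]
    exact Finset.measurable_sum _ fun i _ => hmeas _
  have hTmem : ∀ ω, 1 ≤ T ω ∧ 0 < S (T ω) ω := by
    intro ω
    have := Nat.sInf_mem (hne ω)
    rw [← hT ω] at this
    exact this
  set Bset : ℕ → Set Ω := fun i => {ω | ∀ n, 1 ≤ n → n ≤ i → S n ω ≤ 0} with hBdef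
  have hBT : ∀ i ω, ω ∈ Bset i ↔ i + 1 ≤ T ω := by
    intro i ω
    constructor
    · intro h
      rw [hT]
      by_contra hlt
      push_neg at hlt
      have hmem := Nat.sInf_mem (hne ω)
      exact absurd hmem.2 (not_lt.2 (h _ hmem.1 (by omega)))
    · intro h n hn1 hni
      by_contra hpos
      push_neg at hpos
      have : T ω ≤ n := by rw [hT]; exact Nat.sInf_le ⟨hn1, hpos⟩
      omega
  have hBmeas : ∀ i, MeasurableSet (Bset i) := by
    intro i
    have h : Bset i = ⋂ (n : ℕ), ⋂ (_ : 1 ≤ n ∧ n ≤ i), {ω | S n ω ≤ 0} := by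
      ext ω; simp [hBdef, and_imp]
    rw [h]
    exact MeasurableSet.iInter fun n => MeasurableSet.iInter fun _ =>
      measurableSet_le (hSmeas n) measurable_const
  have hTmeas : Measurable T := by
    apply measurable_to_countable'
    intro n
    match n with
    | 0 =>
      have h : T ⁻¹' {0} = ∅ := by
        ext ω; simp only [Set.mem_preimage, Set.mem_singleton_iff, Set.mem_empty_iff_false,
          iff_false]
        have := (hTmem ω).1; omega
      rw [h]; exact MeasurableSet.empty
    | Nat.succ m =>
      have h : T ⁻¹' {m + 1} = Bset m \ Bset (m + 1) := by
        ext ω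
        simp only [Set.mem_preimage, Set.mem_singleton_iff, Set.mem_diff, hBT]
        omega
      rw [h]; exact (hBmeas m).diff (hBmeas (m + 1))
  have hSTmeas : Measurable fun ω => S (T ω) ω := by
    have h1 : Measurable fun p : Ω × ℕ => S p.2 p.1 :=
      measurable_from_prod_countable_left fun n => hSmeas n
    exact h1.comp (measurable_id.prodMk hTmeas)
  -- sums over Icc
  have hSIcc : ∀ n ω, S n ω = ∑ m ∈ Finset.Icc 1 n, X m ω := by
    intro n ω
    rw [hS, show Finset.Icc 1 n = Finset.Ico 1 (n + 1) from by rw [Finset.Ico_add_one_right_eq_Icc],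
      Finset.sum_Ico_eq_sum_range]
    simp only [Nat.add_sub_cancel]
    exact Finset.sum_congr rfl fun i _ => by rw [add_comm]
  -- the key independence fact
  have hIndepGen : ∀ (i : ℕ) {β : Type} [MeasurableSpace β] [Zero β] (u : β) (f : ℝ → β),
      Measurable f →
      ProbabilityTheory.IndepFun ((Bset i).indicator (fun _ => u))
        (fun ω => f (X (i + 1) ω)) P := by
    intro i β _ _ u f hf
    have hdisj : Disjoint (Finset.Icc 1 i) ({i + 1} : Finset ℕ) := by
      simp [Finset.disjoint_singleton_right, Finset.mem_Icc]
    have hind0 := hindep.indepFun_finset (Finset.Icc 1 i) {i + 1} hdisj hmeas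
    set D : Set ((Finset.Icc 1 i : Finset ℕ) → ℝ) :=
      ⋂ (n : ℕ), ⋂ (_ : n ∈ Finset.Icc 1 i),
        {v | ∑ m ∈ Finset.Icc 1 n,
          (if h : m ∈ Finset.Icc 1 i then v ⟨m, h⟩ else 0) ≤ 0} with hDdef
    have hD : MeasurableSet D := by
      refine MeasurableSet.iInter fun n => MeasurableSet.iInter fun _ => ?_
      refine measurableSet_le (Finset.measurable_sum _ fun m _ => ?_) measurable_const
      by_cases hm : m ∈ Finset.Icc 1 i
      · simp only [dif_pos hm]; exact measurable_pi_apply _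
      · simp only [dif_neg hm]; exact measurable_const
    set φ : ((Finset.Icc 1 i : Finset ℕ) → ℝ) → β := D.indicator (fun _ => u) with hφdef
    set ψ : (({i + 1} : Finset ℕ) → ℝ) → β :=
      fun v => f (v ⟨i + 1, Finset.mem_singleton_self _⟩) with hψdef
    have hφ : Measurable φ := measurable_const.indicator hD
    have hψ : Measurable ψ := hf.comp (measurable_pi_apply _)
    have h := hind0.comp hφ hψ
    have e1 : φ ∘ (fun a (j : (Finset.Icc 1 i : Finset ℕ)) => X j a) =
        (Bset i).indicator (fun _ => u) := by
      funext ω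
      have hiff : ((fun (j : (Finset.Icc 1 i : Finset ℕ)) => X (j : ℕ) ω) ∈ D) ↔ ω ∈ Bset i := by
        simp only [hDdef, Set.mem_iInter, Set.mem_setOf_eq]
        constructor
        · intro h' n hn1 hni
          have hn : n ∈ Finset.Icc 1 i := Finset.mem_Icc.mpr ⟨hn1, hni⟩
          have := h' n hn
          rw [hSIcc]
          refine le_trans (le_of_eq (Finset.sum_congr rfl fun m hm => ?_)) this
          have hm' : m ∈ Finset.Icc 1 i := by
            rw [Finset.mem_Icc] at hm ⊢; omega
          rw [dif_pos hm']
        · intro h' n hn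
          rw [Finset.mem_Icc] at hn
          have := h' n hn.1 hn.2
          rw [hSIcc] at this
          refine le_trans (le_of_eq (Finset.sum_congr rfl fun m hm => ?_)) this
          have hm' : m ∈ Finset.Icc 1 i := by
            rw [Finset.mem_Icc] at hm ⊢; omega
          rw [dif_pos hm']
      simp only [Function.comp_apply, hφdef, Set.indicator_apply]
      exact if_congr hiff rfl rfl
    have e2 : ψ ∘ (fun a (j : (({i + 1} : Finset ℕ) : Finset ℕ)) => X j a) =
        fun ω => f (X (i + 1) ω) := rfl
    rw [e1, e2] at h
    exact h
  -- lintegral of indicator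
  have hindLint : ∀ i, ∫⁻ ω, (Bset i).indicator (fun _ => (1 : ENNReal)) ω ∂P = P (Bset i) := by
    intro i
    rw [lintegral_indicator (hBmeas i)]
    simp
  -- key lintegral product identity
  have hkey : ∀ (i : ℕ) (f : ℝ → ENNReal), Measurable f →
      ∫⁻ ω, (Bset i).indicator (fun _ => (1 : ENNReal)) ω * f (X (i + 1) ω) ∂P
        = P (Bset i) * ∫⁻ ω, f (X 1 ω) ∂P := by
    intro i f hf
    have hIE := hIndepGen i (1 : ENNReal) f hf
    have := ProbabilityTheory.lintegral_mul_eq_lintegral_mul_lintegral_of_indepFun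
      (measurable_const.indicator (hBmeas i)) (hf.comp (hmeas (i + 1))) hIE
    simp only [Pi.mul_apply, Function.comp_apply] at this
    rw [this, hindLint i]
    congr 1
    exact ((hident (i + 1)).comp hf).lintegral_eq
  -- tsum of P (Bset i) equals E[T]
  have hTsum : ∑' i, P (Bset i) = ENNReal.ofReal (∫ ω, (T ω : ℝ) ∂P) := by
    have hpt : ∀ ω, ∑' i, (Bset i).indicator (fun _ => (1 : ENNReal)) ω = (T ω : ENNReal) := by
      intro ω
      have h0 : ∀ i, (Bset i).indicator (fun _ => (1 : ENNReal)) ω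
          = if i < T ω then 1 else 0 := by
        intro i
        rw [Set.indicator_apply]
        exact if_congr (by rw [hBT]; omega) rfl rfl
      calc ∑' i, (Bset i).indicator (fun _ => (1 : ENNReal)) ω
          = ∑' i, if i < T ω then (1 : ENNReal) else 0 := tsum_congr h0
        _ = ∑ i ∈ Finset.range (T ω), if i < T ω then (1 : ENNReal) else 0 := by
            refine tsum_eq_sum fun i hi => ?_
            rw [Finset.mem_range] at hi
            simp [hi]
        _ = (T ω : ENNReal) := by
            rw [Finset.sum_congr rfl fun i hi => if_pos (Finset.mem_range.mp hi)]
            simp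
    calc ∑' i, P (Bset i) = ∑' i, ∫⁻ ω, (Bset i).indicator (fun _ => (1 : ENNReal)) ω ∂P := by
          exact tsum_congr fun i => (hindLint i).symm
      _ = ∫⁻ ω, ∑' i, (Bset i).indicator (fun _ => (1 : ENNReal)) ω ∂P :=
          (lintegral_tsum fun i => (measurable_const.indicator (hBmeas i)).aemeasurable).symm
      _ = ∫⁻ ω, ENNReal.ofReal ((T ω : ℝ)) ∂P := by
          refine lintegral_congr fun ω => ?_
          rw [hpt ω, ENNReal.ofReal_natCast]
      _ = ENNReal.ofReal (∫ ω, (T ω : ℝ) ∂P) :=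
          (ofReal_integral_eq_lintegral_ofReal hTint
            (Filter.Eventually.of_forall fun ω => Nat.cast_nonneg _)).symm
  have hTsum_ne_top : ∑' i, P (Bset i) ≠ ⊤ := by
    rw [hTsum]; exact ENNReal.ofReal_ne_top
  -- Wald's identity
  have hwald : (∫ ω, S (T ω) ω ∂P) = (∫ ω, (T ω : ℝ) ∂P) * ∫ ω, X 1 ω ∂P := by
    set F : ℕ → Ω → ℝ :=
      fun i ω => (Bset i).indicator (fun _ => (1 : ℝ)) ω * X (i + 1) ω with hFdef
    have hFpt : ∀ ω, ∑' i, F i ω = S (T ω) ω := by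
      intro ω
      have h0 : ∀ i, F i ω = if i < T ω then X (i + 1) ω else 0 := by
        intro i
        by_cases h : i < T ω
        · have hm : ω ∈ Bset i := (hBT i ω).mpr (by omega)
          simp [hFdef, Set.indicator_apply, hm, h]
        · have hm : ω ∉ Bset i := fun hc => h (by have := (hBT i ω).mp hc; omega)
          simp [hFdef, Set.indicator_apply, hm, h]
      calc ∑' i, F i ω = ∑' i, if i < T ω then X (i + 1) ω else 0 := tsum_congr h0
        _ = ∑ i ∈ Finset.range (T ω), if i < T ω then X (i + 1) ω else 0 := by
            refine tsum_eq_sum fun i hi => ?_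
            rw [Finset.mem_range] at hi
            simp [hi]
        _ = S (T ω) ω := by
            rw [Finset.sum_congr rfl fun i hi => if_pos (Finset.mem_range.mp hi), hS]
    have hFmeas : ∀ i, Measurable (F i) :=
      fun i => (measurable_const.indicator (hBmeas i)).mul (hmeas (i + 1))
    have hFnorm : ∀ i, ∫⁻ ω, ‖F i ω‖₊ ∂P = P (Bset i) * ∫⁻ ω, (‖X 1 ω‖₊ : ENNReal) ∂P := by
      intro i
      rw [← hkey i (fun x => (‖x‖₊ : ENNReal)) measurable_nnnorm.coe_nnreal_ennreal]
      refine lintegral_congr fun ω => ?_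
      by_cases h : ω ∈ Bset i <;> simp [hFdef, Set.indicator_apply, h]
    have hXnorm_ne : ∫⁻ ω, (‖X 1 ω‖₊ : ENNReal) ∂P ≠ ⊤ := hX1.2.ne
    have hsum_ne : ∑' i, ∫⁻ ω, ‖F i ω‖₊ ∂P ≠ ⊤ := by
      rw [tsum_congr hFnorm, ENNReal.tsum_mul_right]
      exact ENNReal.mul_ne_top hTsum_ne_top hXnorm_ne
    have hint : ∫ ω, S (T ω) ω ∂P = ∑' i, ∫ ω, F i ω ∂P := by
      rw [← integral_tsum (fun i => (hFmeas i).aestronglyMeasurable) hsum_ne]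
      exact integral_congr_ae (Filter.Eventually.of_forall fun ω => (hFpt ω).symm)
    have hFint : ∀ i, ∫ ω, F i ω ∂P = (P (Bset i)).toReal * ∫ ω, X 1 ω ∂P := by
      intro i
      have hIE := hIndepGen i (1 : ℝ) id measurable_id
      have h := ProbabilityTheory.IndepFun.integral_mul_eq_mul_integral hIE
        (measurable_const.indicator (hBmeas i)).aestronglyMeasurable
        (hmeas (i + 1)).aestronglyMeasurable
      simp only [id] at h
      rw [hFdef]
      simp only
      rw [show (fun ω => (Bset i).indicator (fun _ => (1:ℝ)) ω * X (i + 1) ω)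
          = ((Bset i).indicator (fun _ => (1:ℝ))) * X (i + 1) from rfl, h]
      congr 1
      · rw [show ((Bset i).indicator (fun _ => (1:ℝ))) = (Bset i).indicator 1 from rfl]
        exact integral_indicator_one (hBmeas i)
      · exact (hident (i + 1)).integral_eq
    rw [hint, tsum_congr hFint, tsum_mul_right]
    congr 1
    have := ENNReal.tsum_toReal_eq (f := fun i => P (Bset i))
      (fun i => measure_ne_top P _)
    rw [← this, hTsum, ENNReal.toReal_ofReal (integral_nonneg fun ω => Nat.cast_nonneg _)]
  -- the moment inequality
  have hmom : (∫ ω, S (T ω) ω ^ (k + 1) ∂P) ≤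
      (∫ ω, (T ω : ℝ) ∂P) * ∫ ω, max (X 1 ω) 0 ^ (k + 1) ∂P := by
    set g1 : ℝ → ℝ := fun x => max x 0 ^ (k + 1) with hg1def
    have hg1meas : Measurable g1 := (measurable_id.max measurable_const).pow_const _
    have hg1nn : ∀ x, 0 ≤ g1 x := fun x => by rw [hg1def]; positivity
    have hpath : ∀ ω, S (T ω) ω ^ (k + 1) ≤ ∑ i ∈ Finset.range (T ω), g1 (X (i + 1) ω) := by
      intro ω
      obtain ⟨h1, h2⟩ := hTmem ω
      obtain ⟨m, hm⟩ : ∃ m, T ω = m + 1 := ⟨T ω - 1, by omega⟩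
      have hSm : S m ω ≤ 0 := by
        rcases Nat.eq_zero_or_pos m with h0 | hpos
        · subst h0; rw [hS]; simp
        · by_contra hpos'
          push_neg at hpos'
          have : T ω ≤ m := by rw [hT]; exact Nat.sInf_le ⟨hpos, hpos'⟩
          omega
      have hle : S (T ω) ω ≤ max (X (T ω) ω) 0 := by
        rw [hm, hS (m + 1), Finset.sum_range_succ, ← hS m]
        have h3 := le_max_left (X (m + 1) ω) 0
        linarith
      have hle2 : S (T ω) ω ^ (k + 1) ≤ g1 (X (T ω) ω) := by
        rw [hg1def]
        exact pow_le_pow_left₀ h2.le hle (k + 1)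
      refine le_trans hle2 ?_
      have hmmem : m ∈ Finset.range (T ω) := by rw [hm]; exact Finset.self_mem_range_succ m
      calc g1 (X (T ω) ω) = g1 (X (m + 1) ω) := by rw [hm]
        _ ≤ ∑ i ∈ Finset.range (T ω), g1 (X (i + 1) ω) :=
            Finset.single_le_sum (f := fun i => g1 (X (i + 1) ω)) (fun i _ => hg1nn _) hmmem
    have hptE : ∀ ω, ENNReal.ofReal (∑ i ∈ Finset.range (T ω), g1 (X (i + 1) ω))
        = ∑' i, (Bset i).indicator (fun _ => (1 : ENNReal)) ω
            * ENNReal.ofReal (g1 (X (i + 1) ω)) := by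
      intro ω
      have h0 : ∀ i, (Bset i).indicator (fun _ => (1 : ENNReal)) ω
            * ENNReal.ofReal (g1 (X (i + 1) ω))
          = if i < T ω then ENNReal.ofReal (g1 (X (i + 1) ω)) else 0 := by
        intro i
        by_cases h : i < T ω
        · have hmm : ω ∈ Bset i := (hBT i ω).mpr (by omega)
          simp [Set.indicator_apply, hmm, h]
        · have hmm : ω ∉ Bset i := fun hc => h (by have := (hBT i ω).mp hc; omega)
          simp [Set.indicator_apply, hmm, h]
      rw [ENNReal.ofReal_sum_of_nonneg (fun i _ => hg1nn _), tsum_congr h0,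
        tsum_eq_sum (s := Finset.range (T ω)) (fun i hi => by
          rw [Finset.mem_range] at hi; simp [hi])]
      exact (Finset.sum_congr rfl fun i hi => if_pos (Finset.mem_range.mp hi)).symm
    have hSTnn : ∀ ω, 0 ≤ S (T ω) ω ^ (k + 1) := fun ω => pow_nonneg (hTmem ω).2.le _
    have hEg : ENNReal.ofReal (∫ ω, max (X 1 ω) 0 ^ (k + 1) ∂P)
        = ∫⁻ ω, ENNReal.ofReal (g1 (X 1 ω)) ∂P :=
      ofReal_integral_eq_lintegral_ofReal hXk
        (Filter.Eventually.of_forall fun ω => by positivity)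
    have hA : ∫⁻ ω, ENNReal.ofReal (S (T ω) ω ^ (k + 1)) ∂P
        ≤ ENNReal.ofReal ((∫ ω, (T ω : ℝ) ∂P) * ∫ ω, max (X 1 ω) 0 ^ (k + 1) ∂P) := by
      calc ∫⁻ ω, ENNReal.ofReal (S (T ω) ω ^ (k + 1)) ∂P
          ≤ ∫⁻ ω, ENNReal.ofReal (∑ i ∈ Finset.range (T ω), g1 (X (i + 1) ω)) ∂P :=
            lintegral_mono fun ω => ENNReal.ofReal_le_ofReal (hpath ω)
        _ = ∫⁻ ω, ∑' i, (Bset i).indicator (fun _ => (1 : ENNReal)) ω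
              * ENNReal.ofReal (g1 (X (i + 1) ω)) ∂P :=
            lintegral_congr fun ω => hptE ω
        _ = ∑' i, ∫⁻ ω, (Bset i).indicator (fun _ => (1 : ENNReal)) ω
              * ENNReal.ofReal (g1 (X (i + 1) ω)) ∂P :=
            lintegral_tsum fun i => ((measurable_const.indicator (hBmeas i)).mul
              ((ENNReal.measurable_ofReal.comp hg1meas).comp (hmeas (i + 1)))).aemeasurable
        _ = ∑' i, P (Bset i) * ∫⁻ ω, ENNReal.ofReal (g1 (X 1 ω)) ∂P :=
            tsum_congr fun i => hkey i (fun x => ENNReal.ofReal (g1 x))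
              (ENNReal.measurable_ofReal.comp hg1meas)
        _ = (∑' i, P (Bset i)) * ∫⁻ ω, ENNReal.ofReal (g1 (X 1 ω)) ∂P :=
            ENNReal.tsum_mul_right
        _ = ENNReal.ofReal (∫ ω, (T ω : ℝ) ∂P)
              * ENNReal.ofReal (∫ ω, max (X 1 ω) 0 ^ (k + 1) ∂P) := by rw [hTsum, hEg]
        _ = ENNReal.ofReal ((∫ ω, (T ω : ℝ) ∂P) * ∫ ω, max (X 1 ω) 0 ^ (k + 1) ∂P) :=
            (ENNReal.ofReal_mul (integral_nonneg fun ω => Nat.cast_nonneg _)).symm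
    have hforms : ∫ ω, S (T ω) ω ^ (k + 1) ∂P
        = (∫⁻ ω, ENNReal.ofReal (S (T ω) ω ^ (k + 1)) ∂P).toReal :=
      integral_eq_lintegral_of_nonneg_ae (Filter.Eventually.of_forall hSTnn)
        ((hSTmeas.pow_const _).aestronglyMeasurable)
    rw [hforms]
    have hfin := ENNReal.toReal_mono ENNReal.ofReal_ne_top hA
    rwa [ENNReal.toReal_ofReal (mul_nonneg (integral_nonneg fun ω => Nat.cast_nonneg _)
      (integral_nonneg fun ω => by positivity))] at hfin
  refine ⟨hmom, hwald, ?_⟩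
  -- arithmetic conclusion
  have ht1 : (1 : ℝ) ≤ ∫ ω, (T ω : ℝ) ∂P := by
    have h := integral_mono (integrable_const (1 : ℝ)) hTint
      (fun ω => by simpa using (Nat.one_le_cast (α := ℝ)).mpr (hTmem ω).1)
    simpa using h
  have ht0 : (0 : ℝ) < ∫ ω, (T ω : ℝ) ∂P := lt_of_lt_of_le one_pos ht1
  have hc0 : (0 : ℝ) ≤ ∫ ω, max (X 1 ω) 0 ^ (k + 1) ∂P :=
    integral_nonneg fun ω => by positivity
  rw [hwald]
  set t := ∫ ω, (T ω : ℝ) ∂P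
  set μ₁ := ∫ ω, X 1 ω ∂P
  set c := ∫ ω, max (X 1 ω) 0 ^ (k + 1) ∂P
  set a := ∫ ω, S (T ω) ω ^ (k + 1) ∂P
  have hden : (0 : ℝ) < ((k : ℝ) + 1) * (t * μ₁) := by positivity
  calc a / (((k : ℝ) + 1) * (t * μ₁)) ≤ (t * c) / (((k : ℝ) + 1) * (t * μ₁)) := by
        exact (div_le_div_iff_of_pos_right hden).mpr hmom
    _ = c / (((k : ℝ) + 1) * μ₁) := by
        rw [show ((k : ℝ) + 1) * (t * μ₁) = t * (((k : ℝ) + 1) * μ₁) by ring,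
          mul_div_mul_left _ _ (ne_of_gt ht0)]
end

section
/- Let X, Y be integrable real random variables and U ~ Unif(0,1) independent of both. Then the total variation distance between the laws of X + U and Y + U satisfies ‖Law(X+U) − Law(Y+U)‖_TV ≤ W_1(X, Y). -/
open MeasureTheory Real

noncomputable def F (A : Set ℝ) (x : ℝ) : ℝ := (volume (A ∩ Set.Ioo x (x+1))).toReal

lemma F_ne_top (A : Set ℝ) (x : ℝ) : volume (A ∩ Set.Ioo x (x+1)) ≠ ⊤ := by
  refine ne_top_of_le_ne_top ?_ (measure_mono Set.inter_subset_right)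
  simp [Real.volume_Ioo]

lemma F_nonneg (A : Set ℝ) (x : ℝ) : 0 ≤ F A x := ENNReal.toReal_nonneg

lemma F_le_one (A : Set ℝ) (x : ℝ) : F A x ≤ 1 := by
  have h : volume (A ∩ Set.Ioo x (x+1)) ≤ volume (Set.Ioo x (x+1)) :=
    measure_mono Set.inter_subset_right
  rw [Real.volume_Ioo] at h
  simp only [add_sub_cancel_left, ENNReal.ofReal_one] at h
  have := ENNReal.toReal_mono (by simp) h
  simpa [F] using this

lemma F_sub_le (A : Set ℝ) {x y : ℝ} (hxy : x ≤ y) : F A y - F A x ≤ y - x := by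
  have hsub : A ∩ Set.Ioo y (y+1) ⊆ (A ∩ Set.Ioo x (x+1)) ∪ Set.Ico (x+1) (y+1) := by
    rintro t ⟨htA, ht1, ht2⟩
    by_cases h : t ∈ Set.Ioo x (x+1)
    · exact Or.inl ⟨htA, h⟩
    · right
      simp only [Set.mem_Ioo, not_and, not_lt] at h
      exact ⟨h (lt_of_le_of_lt hxy ht1), ht2⟩
  have h1 : volume (A ∩ Set.Ioo y (y+1)) ≤ volume (A ∩ Set.Ioo x (x+1)) + ENNReal.ofReal (y - x) := by
    refine le_trans (measure_mono hsub) (le_trans (measure_union_le _ _) ?_)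
    gcongr
    rw [Real.volume_Ico]
    exact le_of_eq (by ring_nf)
  have := ENNReal.toReal_mono (by
      exact ENNReal.add_ne_top.2 ⟨F_ne_top A x, ENNReal.ofReal_ne_top⟩) h1
  rw [ENNReal.toReal_add (F_ne_top A x) ENNReal.ofReal_ne_top,
    ENNReal.toReal_ofReal (by linarith)] at this
  simp only [F]
  linarith [this]

lemma F_sub_le' (A : Set ℝ) {x y : ℝ} (hxy : x ≤ y) : F A x - F A y ≤ y - x := by
  have hsub : A ∩ Set.Ioo x (x+1) ⊆ (A ∩ Set.Ioo y (y+1)) ∪ Set.Ioc x y := by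
    rintro t ⟨htA, ht1, ht2⟩
    by_cases h : t ∈ Set.Ioo y (y+1)
    · exact Or.inl ⟨htA, h⟩
    · right
      simp only [Set.mem_Ioo, not_and, not_lt] at h
      rcases lt_or_ge y t with hy | hy
      · exact absurd (h hy) (not_le.2 (by linarith))
      · exact ⟨ht1, hy⟩
  have h1 : volume (A ∩ Set.Ioo x (x+1)) ≤ volume (A ∩ Set.Ioo y (y+1)) + ENNReal.ofReal (y - x) := by
    refine le_trans (measure_mono hsub) (le_trans (measure_union_le _ _) ?_)
    gcongr
    rw [Real.volume_Ioc]
  have := ENNReal.toReal_mono (by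
      exact ENNReal.add_ne_top.2 ⟨F_ne_top A y, ENNReal.ofReal_ne_top⟩) h1
  rw [ENNReal.toReal_add (F_ne_top A y) ENNReal.ofReal_ne_top,
    ENNReal.toReal_ofReal (by linarith)] at this
  simp only [F]
  linarith [this]

lemma F_lip (A : Set ℝ) : LipschitzWith 1 (F A) := by
  rw [lipschitzWith_iff_dist_le_mul]
  intro x y
  simp only [NNReal.coe_one, one_mul, Real.dist_eq]
  rw [abs_le]
  rcases le_total x y with h | h
  · have h1 := F_sub_le A h
    have h2 := F_sub_le' A h
    rw [abs_of_nonpos (by linarith : x - y ≤ 0)]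
    constructor <;> linarith
  · have h1 := F_sub_le A h
    have h2 := F_sub_le' A h
    rw [abs_of_nonneg (by linarith : 0 ≤ x - y)]
    constructor <;> linarith

lemma F_cont (A : Set ℝ) : Continuous (F A) := (F_lip A).continuous

lemma map_add_eq_integral_F {Ω : Type*} [MeasurableSpace Ω] (P : Measure Ω)
    [IsProbabilityMeasure P] (Z U : Ω → ℝ) (hZ : Measurable Z) (hU : Measurable U)
    (hUnif : P.map U = volume.restrict (Set.Ioo (0 : ℝ) 1))
    (hind : ProbabilityTheory.IndepFun U Z P)
    {A : Set ℝ} (hA : MeasurableSet A) :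
    (P.map (fun ω => Z ω + U ω) A).toReal = ∫ x, F A x ∂(P.map Z) := by
  have hmap : P.map (fun ω => (Z ω, U ω)) = (P.map Z).prod (P.map U) :=
    (ProbabilityTheory.indepFun_iff_map_prod_eq_prod_map_map hZ.aemeasurable
      hU.aemeasurable).1 hind.symm
  have hs : MeasurableSet {p : ℝ × ℝ | p.1 + p.2 ∈ A} :=
    (measurable_fst.add measurable_snd) hA
  have h1 : P.map (fun ω => Z ω + U ω) A
      = ((P.map Z).prod (P.map U)) {p : ℝ × ℝ | p.1 + p.2 ∈ A} := by
    rw [← hmap, Measure.map_apply (f := fun ω => Z ω + U ω) (hZ.add hU) hA,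
      Measure.map_apply (hZ.prodMk hU) hs]
    rfl
  have h2 : ∀ z : ℝ, (P.map U) (Prod.mk z ⁻¹' {p : ℝ × ℝ | p.1 + p.2 ∈ A})
      = volume (A ∩ Set.Ioo z (z + 1)) := by
    intro z
    have hset : Prod.mk z ⁻¹' {p : ℝ × ℝ | p.1 + p.2 ∈ A} = (fun u => z + u) ⁻¹' A := rfl
    have hset2 : ((fun u => z + u) ⁻¹' A) ∩ Set.Ioo 0 1
        = (fun u => z + u) ⁻¹' (A ∩ Set.Ioo z (z + 1)) := by
      ext u
      simp only [Set.mem_inter_iff, Set.mem_preimage, Set.mem_Ioo]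
      constructor
      · rintro ⟨hA', h0, h1'⟩; exact ⟨hA', by linarith, by linarith⟩
      · rintro ⟨hA', h0, h1'⟩; exact ⟨hA', by linarith, by linarith⟩
    rw [hUnif, hset, Measure.restrict_apply (measurable_const_add z hA), hset2,
      measure_preimage_add]
  have h3 : ((P.map Z).prod (P.map U)) {p : ℝ × ℝ | p.1 + p.2 ∈ A}
      = ∫⁻ z, ENNReal.ofReal (F A z) ∂(P.map Z) := by
    rw [Measure.prod_apply hs]
    refine lintegral_congr fun z => ?_
    rw [h2 z, F, ENNReal.ofReal_toReal (F_ne_top A z)]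
  rw [h1, h3, ← integral_eq_lintegral_of_nonneg_ae (Filter.Eventually.of_forall (F_nonneg A))
    (F_cont A).aestronglyMeasurable]

/-- Wasserstein-1 distance between two laws on `ℝ`: infimum of `E|X − Y|` over couplings. -/
noncomputable def W1 (μ ν : Measure ℝ) : ℝ :=
  sInf {c : ℝ | ∃ γ : Measure (ℝ × ℝ), IsProbabilityMeasure γ ∧
    γ.map Prod.fst = μ ∧ γ.map Prod.snd = ν ∧ c = ∫ p, |p.1 - p.2| ∂γ}

/-- Total variation distance between two laws on `ℝ`. -/
noncomputable def tvDist (μ ν : Measure ℝ) : ℝ :=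
  sSup {c : ℝ | ∃ A : Set ℝ, MeasurableSet A ∧ c = |(μ A).toReal - (ν A).toReal|}

/-- Lemma 3.2: smoothing converts `W₁` into total variation. If `U ~ Unif(0,1)` is
independent of the integrable random variables `X` and `Y`, then
`‖Law(X+U) − Law(Y+U)‖_TV ≤ W₁(X, Y)`. -/
theorem stmt15 {Ω : Type*} [MeasurableSpace Ω] (P : Measure Ω) [IsProbabilityMeasure P]
    (X Y U : Ω → ℝ) (hX : Measurable X) (hY : Measurable Y) (hU : Measurable U)
    (hXInt : Integrable X P) (hYInt : Integrable Y P)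
    (hUnif : P.map U = volume.restrict (Set.Ioo (0 : ℝ) 1))
    (hUX : ProbabilityTheory.IndepFun U X P)
    (hUY : ProbabilityTheory.IndepFun U Y P) :
    tvDist (P.map (fun ω => X ω + U ω)) (P.map (fun ω => Y ω + U ω)) ≤
      W1 (P.map X) (P.map Y) := by
  unfold tvDist W1
  apply le_csInf
  · -- the coupling set is nonempty
    refine ⟨∫ p, |p.1 - p.2| ∂(P.map (fun ω => (X ω, Y ω))),
      P.map (fun ω => (X ω, Y ω)), ?_, ?_, ?_, rfl⟩
    · exact Measure.isProbabilityMeasure_map (hX.prodMk hY).aemeasurable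
    · rw [Measure.map_map measurable_fst (hX.prodMk hY)]; rfl
    · rw [Measure.map_map measurable_snd (hX.prodMk hY)]; rfl
  · rintro c ⟨γ, hγprob, hγ1, hγ2, rfl⟩
    have habs_int : Integrable (fun p : ℝ × ℝ => |p.1 - p.2|) γ := by
      have hid1 : Integrable (fun x : ℝ => x) (γ.map Prod.fst) := by
        rw [hγ1]
        exact (integrable_map_measure aestronglyMeasurable_id hX.aemeasurable).2 hXInt
      have hid2 : Integrable (fun x : ℝ => x) (γ.map Prod.snd) := by
        rw [hγ2]
        exact (integrable_map_measure aestronglyMeasurable_id hY.aemeasurable).2 hYInt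
      have h1 : Integrable (fun p : ℝ × ℝ => p.1) γ :=
        (integrable_map_measure aestronglyMeasurable_id measurable_fst.aemeasurable).1 hid1
      have h2 : Integrable (fun p : ℝ × ℝ => p.2) γ :=
        (integrable_map_measure aestronglyMeasurable_id measurable_snd.aemeasurable).1 hid2
      exact (h1.sub h2).abs
    apply Real.sSup_le
    · rintro b ⟨A, hA, rfl⟩
      -- express both probabilities as integrals of F A against the laws
      rw [map_add_eq_integral_F P X U hX hU hUnif hUX hA,
        map_add_eq_integral_F P Y U hY hU hUnif hUY hA, ← hγ1, ← hγ2,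
        integral_map measurable_fst.aemeasurable (F_cont A).aestronglyMeasurable,
        integral_map measurable_snd.aemeasurable (F_cont A).aestronglyMeasurable]
      have hFint1 : Integrable (fun p : ℝ × ℝ => F A p.1) γ := by
        refine Integrable.mono' (integrable_const 1)
          ((F_cont A).comp continuous_fst).aestronglyMeasurable
          (Filter.Eventually.of_forall fun p => ?_)
        rw [Real.norm_eq_abs, abs_of_nonneg (F_nonneg A _)]
        exact F_le_one A _
      have hFint2 : Integrable (fun p : ℝ × ℝ => F A p.2) γ := by
        refine Integrable.mono' (integrable_const 1)
          ((F_cont A).comp continuous_snd).aestronglyMeasurable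
          (Filter.Eventually.of_forall fun p => ?_)
        rw [Real.norm_eq_abs, abs_of_nonneg (F_nonneg A _)]
        exact F_le_one A _
      rw [← integral_sub hFint1 hFint2]
      rw [← Real.norm_eq_abs]
      refine le_trans (norm_integral_le_integral_norm _) ?_
      simp only [Real.norm_eq_abs]
      refine integral_mono (hFint1.sub hFint2).abs habs_int fun p => ?_
      have := (F_lip A).dist_le_mul p.1 p.2
      simpa [Real.dist_eq] using this
    · exact integral_nonneg fun p => abs_nonneg _
end
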